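/- For a free group F of rank k ≥ 2 with the word-length function, if a subset S ⊆ F has strict asymptotic density ρ (i.e., the limit of ball proportions #{w ∈ S : |w| ≤ n}/#{w ∈ F : |w| ≤ n} exists and equals ρ), then the strict annular density of S also exists and equals ρ, i.e. lim_{n→∞} (1/2)(γ(n−1,S)/γ(n−1,F) + γ(n,S)/γ(n,F)) = ρ, where γ(n,X) = #{w ∈ X : |w| = n}. -/

import Mathlib

open Filter

open FreeGroup


variable {β : Type*} [DecidableEq β]

/-- no cancelling adjacent pair -/
def NCW (l : List (β × Bool)) : Prop :=
  ∀ (L₁ L₂ : List (β × Bool)) (x : β) (b : Bool), l ≠ L₁ ++ (x, b) :: (x, !b) :: L₂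

lemma ncw_toWord (w : FreeGroup β) : NCW (toWord w) := by
  intro L₁ L₂ x b h
  exact FreeGroup.reduce.not (p := False) (L₁ := toWord w) (L₂ := L₁) (L₃ := L₂) (x := x) (b := b)
    (by rw [reduce_toWord]; exact h)

lemma reduce_eq_self_of_ncw {l : List (β × Bool)} (h : NCW l) : reduce l = l := by
  rcases Relation.ReflTransGen.cases_head (FreeGroup.reduce.red (L := l)) with h1 | ⟨m, hs, _⟩
  · exact h1.symm
  · cases hs with
    | @not L₁ L₂ x b => exact absurd rfl (h L₁ L₂ x b)

omit [DecidableEq β] in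
lemma ncw_append_singleton {l : List (β × Bool)} {x : β × Bool} (h : NCW l)
    (hx : ∀ a bb, l.getLast? = some (a, bb) → x ≠ (a, !bb)) : NCW (l ++ [x]) := by
  intro L₁ L₂ x' b hl
  rcases List.eq_nil_or_concat L₂ with rfl | ⟨M, y, rfl⟩
  · have : l ++ [x] = (L₁ ++ [(x', b)]) ++ [(x', !b)] := by simpa using hl
    have h2 := List.append_inj' this rfl
    obtain ⟨hleq, hxeq⟩ := h2
    have : l.getLast? = some (x', b) := by rw [hleq]; simp
    exact hx x' b this (by simpa using hxeq)
  · have : l ++ [x] = (L₁ ++ (x', b) :: (x', !b) :: M) ++ [y] := by simpa using hl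
    have h2 := List.append_inj' this rfl
    exact h L₁ M x' b h2.1

variable {k : ℕ}

def cands (hk : 2 ≤ k) (l : List (Fin k × Bool)) : List (Fin k × Bool) :=
  [((⟨0, by omega⟩ : Fin k), true), ((⟨0, by omega⟩ : Fin k), false),
    ((⟨1, by omega⟩ : Fin k), true)].filter
    (fun x => l.getLast?.all (fun p => x ≠ (p.1, !p.2)))

lemma filter_three {γ : Type*} [DecidableEq γ] (c1 c2 c3 y : γ) (d12 : c1 ≠ c2) (d13 : c1 ≠ c3)
    (d23 : c2 ≠ c3) : 2 ≤ ([c1, c2, c3].filter (fun x => decide (x ≠ y))).length := by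
  by_cases h1 : c1 = y <;> by_cases h2 : c2 = y <;> by_cases h3 : c3 = y <;>
    simp_all [List.filter_cons]

lemma nodup_cands (hk : 2 ≤ k) (l : List (Fin k × Bool)) : (cands hk l).Nodup := by
  apply List.Nodup.filter
  simp [List.nodup_cons, Fin.ext_iff]

lemma two_le_length_cands (hk : 2 ≤ k) (l : List (Fin k × Bool)) :
    2 ≤ (cands hk l).length := by
  cases h : l.getLast? with
  | none => simp [cands, h]
  | some p =>
    have : cands hk l = [((⟨0, by omega⟩ : Fin k), true), ((⟨0, by omega⟩ : Fin k), false),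
        ((⟨1, by omega⟩ : Fin k), true)].filter (fun x => decide (x ≠ (p.1, !p.2))) := by
      simp [cands, h]
    rw [this]
    apply filter_three <;> simp [Fin.ext_iff]

lemma toWord_mk_append (hk : 2 ≤ k) {w : FreeGroup (Fin k)} {x : Fin k × Bool}
    (hx : x ∈ cands hk (toWord w)) :
    toWord (FreeGroup.mk (toWord w ++ [x])) = toWord w ++ [x] := by
  rw [toWord_mk]
  apply reduce_eq_self_of_ncw
  apply ncw_append_singleton (ncw_toWord w)
  intro a bb hlast heq
  have h2 := List.of_mem_filter hx
  rw [hlast] at h2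
  simp at h2
  exact h2 heq

/-- sphere of radius n in the free group -/
def Tn (k n : ℕ) : Set (FreeGroup (Fin k)) := {w | (toWord w).length = n}

lemma finite_len_le (k n : ℕ) : {w : FreeGroup (Fin k) | (toWord w).length ≤ n}.Finite := by
  have hsub : {w : FreeGroup (Fin k) | (toWord w).length ≤ n} ⊆
      toWord ⁻¹' {l | l.length ≤ n} := fun w h => h
  exact ((List.finite_length_le _ n).preimage (toWord_injective.injOn)).subset hsub

lemma finite_Tn (k n : ℕ) : (Tn k n).Finite :=
  (finite_len_le k n).subset (fun w h => le_of_eq h)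

lemma two_mul_card_Tn_le (hk : 2 ≤ k) (n : ℕ) : 2 * (Tn k n).ncard ≤ (Tn k (n + 1)).ncard := by
  have hfin : (Tn k (n + 1)).Finite := finite_Tn k (n + 1)
  have : Finite (Tn k (n + 1)) := hfin.to_subtype
  set φ : (Tn k n) × Fin 2 → Tn k (n + 1) := fun p =>
    ⟨FreeGroup.mk (toWord p.1.1 ++ [(cands hk (toWord p.1.1)).get
        ⟨p.2.1, by have := two_le_length_cands hk (toWord p.1.1); omega⟩]), by
      have hmem : (cands hk (toWord p.1.1)).get
          ⟨p.2.1, by have := two_le_length_cands hk (toWord p.1.1); omega⟩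
          ∈ cands hk (toWord p.1.1) := List.get_mem _ _
      have := toWord_mk_append hk hmem
      simp only [Tn, Set.mem_setOf_eq] at *
      rw [this, List.length_append, p.1.2]
      simp⟩ with hφ
  have hinj : Function.Injective φ := by
    rintro ⟨⟨w, hw⟩, i⟩ ⟨⟨w', hw'⟩, i'⟩ heq
    have heq2 : (φ (⟨⟨w, hw⟩, i⟩)).1.toWord = (φ (⟨⟨w', hw'⟩, i'⟩)).1.toWord := by rw [heq]
    rw [hφ] at heq2
    simp only at heq2
    rw [toWord_mk_append hk (List.get_mem _ _), toWord_mk_append hk (List.get_mem _ _)] at heq2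
    have hlen : (toWord w).length = (toWord w').length := by
      rw [hw, hw']
    obtain ⟨hl, hx⟩ := List.append_inj heq2 hlen
    have hww : w = w' := toWord_injective hl
    subst hww
    simp only [List.cons.injEq, and_true] at hx
    have hmk := (List.Nodup.get_inj_iff (nodup_cands hk (toWord w))).mp hx
    have hval : i.1 = i'.1 := by
      have := congrArg Fin.val hmk
      simpa using this
    simp [Prod.ext_iff, Fin.ext_iff, hval]
  calc 2 * (Tn k n).ncard = Nat.card ((Tn k n) × Fin 2) := by
        simp [Nat.card_prod, Nat.card_coe_set_eq, Nat.card_eq_fintype_card, mul_comm]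
    _ ≤ Nat.card (Tn k (n + 1)) := Nat.card_le_card_of_injective φ hinj
    _ = (Tn k (n + 1)).ncard := Nat.card_coe_set_eq _

lemma card_Tn_zero (k : ℕ) : (Tn k 0).ncard = 1 := by
  have : Tn k 0 = {1} := by
    ext w
    simp [Tn, List.length_eq_zero_iff, toWord_eq_nil_iff]
  rw [this, Set.ncard_singleton]


variable {k : ℕ}

def Bset (X : Set (FreeGroup (Fin k))) (n : ℕ) : Set (FreeGroup (Fin k)) :=
  {w | w ∈ X ∧ (toWord w).length ≤ n}

def Sset (X : Set (FreeGroup (Fin k))) (n : ℕ) : Set (FreeGroup (Fin k)) :=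
  {w | w ∈ X ∧ (toWord w).length = n}

lemma finite_Bset (X : Set (FreeGroup (Fin k))) (n : ℕ) : (Bset X n).Finite :=
  (finite_len_le k n).subset (fun _ h => h.2)

lemma finite_Sset (X : Set (FreeGroup (Fin k))) (n : ℕ) : (Sset X n).Finite :=
  (finite_Tn k n).subset (fun _ h => h.2)

lemma ball_split (X : Set (FreeGroup (Fin k))) (n : ℕ) :
    (Bset X (n + 1)).ncard = (Bset X n).ncard + (Sset X (n + 1)).ncard := by
  have hu : Bset X (n + 1) = Bset X n ∪ Sset X (n + 1) := by
    ext w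
    simp only [Bset, Sset, Set.mem_setOf_eq, Set.mem_union]
    constructor
    · rintro ⟨h1, h2⟩
      rcases Nat.lt_or_ge (toWord w).length (n + 1) with h | h
      · exact Or.inl ⟨h1, by omega⟩
      · exact Or.inr ⟨h1, by omega⟩
    · rintro (⟨h1, h2⟩ | ⟨h1, h2⟩) <;> exact ⟨h1, by omega⟩
  have hd : Disjoint (Bset X n) (Sset X (n + 1)) := by
    rw [Set.disjoint_left]
    rintro w ⟨_, h1⟩ ⟨_, h2⟩
    omega
  rw [hu, Set.ncard_union_eq hd (finite_Bset X n) (finite_Sset X (n + 1))]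

lemma Sset_univ (n : ℕ) : Sset (Set.univ : Set (FreeGroup (Fin k))) n = Tn k n := by
  ext w; simp [Sset, Tn]

lemma Bset_univ (n : ℕ) :
    Bset (Set.univ : Set (FreeGroup (Fin k))) n = {w | (toWord w).length ≤ n} := by
  ext w; simp [Bset]

lemma one_le_card_Tn (hk : 2 ≤ k) (n : ℕ) : 1 ≤ (Tn k n).ncard := by
  induction n with
  | zero => rw [card_Tn_zero]
  | succ m ih => have := two_mul_card_Tn_le hk m; omega

lemma ball_le_sphere (hk : 2 ≤ k) (n : ℕ) :
    (Bset (Set.univ : Set (FreeGroup (Fin k))) n).ncard ≤ (Tn k (n + 1)).ncard := by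
  induction n with
  | zero =>
    have h0 : Bset (Set.univ : Set (FreeGroup (Fin k))) 0 = Tn k 0 := by
      ext w; simp [Bset, Tn, Nat.le_zero]
    rw [h0, card_Tn_zero]
    exact one_le_card_Tn hk 1
  | succ m ih =>
    rw [ball_split, Sset_univ]
    have := two_mul_card_Tn_le hk (m + 1)
    omega

lemma sphere_le_ball (X : Set (FreeGroup (Fin k))) (n : ℕ) :
    (Tn k n).ncard ≤ (Bset (Set.univ : Set (FreeGroup (Fin k))) n).ncard := by
  apply Set.ncard_le_ncard _ (finite_Bset _ n)
  intro w h
  exact ⟨trivial, le_of_eq h⟩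


theorem annular_of_asymptotic (k : ℕ) (hk : 2 ≤ k) (S : Set (FreeGroup (Fin k))) (ρ : ℝ)
    (γ : Set (FreeGroup (Fin k)) → ℕ → ℝ)
    (hγ : ∀ X n, γ X n = (Nat.card {w : FreeGroup (Fin k) // w ∈ X ∧
        (FreeGroup.toWord w).length = n} : ℝ))
    (hball : Tendsto (fun n : ℕ =>
        (Nat.card {w : FreeGroup (Fin k) // w ∈ S ∧ (FreeGroup.toWord w).length ≤ n} : ℝ) /
        (Nat.card {w : FreeGroup (Fin k) // (FreeGroup.toWord w).length ≤ n} : ℝ))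
      atTop (nhds ρ)) :
    Tendsto (fun n : ℕ =>
        (1 / 2) * (γ S (n - 1) / γ Set.univ (n - 1) + γ S n / γ Set.univ n))
      atTop (nhds ρ) := by
  classical
  -- real-valued counting functions
  set bS : ℕ → ℝ := fun n => ((Bset S n).ncard : ℝ) with hbS
  set B : ℕ → ℝ := fun n => ((Bset (Set.univ : Set (FreeGroup (Fin k))) n).ncard : ℝ) with hB
  set tF : ℕ → ℝ := fun n => ((Tn k n).ncard : ℝ) with htF
  set sS : ℕ → ℝ := fun n => ((Sset S n).ncard : ℝ) with hsS
  have htF1 : ∀ n, (1 : ℝ) ≤ tF n := fun n => by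
    have := one_le_card_Tn hk n
    simp only [htF]
    exact_mod_cast this
  have htFpos : ∀ n, (0 : ℝ) < tF n := fun n => lt_of_lt_of_le one_pos (htF1 n)
  have hB1 : ∀ n, (1 : ℝ) ≤ B n := fun n => by
    have h1 := one_le_card_Tn hk n
    have h2 := sphere_le_ball (X := S) n
    simp only [hB]
    exact_mod_cast le_trans h1 h2
  have hBpos : ∀ n, (0 : ℝ) < B n := fun n => lt_of_lt_of_le one_pos (hB1 n)
  have hBB : ∀ n, B (n + 1) = B n + tF (n + 1) := fun n => by
    have := ball_split (Set.univ : Set (FreeGroup (Fin k))) n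
    rw [Sset_univ] at this
    simp only [hB, htF]
    exact_mod_cast this
  have hbb : ∀ n, bS (n + 1) = bS n + sS (n + 1) := fun n => by
    have := ball_split S n
    simp only [hbS, hsS]
    exact_mod_cast this
  have hBle : ∀ n, B n ≤ tF (n + 1) := fun n => by
    have := ball_le_sphere hk n
    simp only [hB, htF]
    exact_mod_cast this
  -- identify hball with bS / B
  have hr : Tendsto (fun n => bS n / B n) atTop (nhds ρ) := by
    have he : ∀ n : ℕ,
        (Nat.card {w : FreeGroup (Fin k) // w ∈ S ∧ (FreeGroup.toWord w).length ≤ n} : ℝ) /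
        (Nat.card {w : FreeGroup (Fin k) // (FreeGroup.toWord w).length ≤ n} : ℝ)
        = bS n / B n := by
      intro n
      have e1 : Nat.card {w : FreeGroup (Fin k) // w ∈ S ∧ (FreeGroup.toWord w).length ≤ n}
          = (Bset S n).ncard := Nat.card_coe_set_eq _
      have e2 : Nat.card {w : FreeGroup (Fin k) // (FreeGroup.toWord w).length ≤ n}
          = (Bset (Set.univ : Set (FreeGroup (Fin k))) n).ncard := by
        rw [show (Bset (Set.univ : Set (FreeGroup (Fin k))) n)
            = {w : FreeGroup (Fin k) | (FreeGroup.toWord w).length ≤ n} by ext w; simp [Bset]]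
        exact Nat.card_coe_set_eq _
      rw [e1, e2]
    simp only [he] at hball
    exact hball
  set r : ℕ → ℝ := fun n => bS n / B n with hrdef
  set t : ℕ → ℝ := fun n => γ S n / γ Set.univ n with htdef
  have htγ : ∀ n, t n = sS n / tF n := by
    intro n
    have e1 : Nat.card {w : FreeGroup (Fin k) // w ∈ S ∧ (FreeGroup.toWord w).length = n}
        = (Sset S n).ncard := Nat.card_coe_set_eq _
    have e2 : Nat.card {w : FreeGroup (Fin k) // w ∈ (Set.univ : Set (FreeGroup (Fin k))) ∧
        (FreeGroup.toWord w).length = n} = (Sset (Set.univ : Set (FreeGroup (Fin k))) n).ncard :=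
      Nat.card_coe_set_eq _
    rw [Sset_univ] at e2
    simp only [htdef, hγ, hsS, htF, e1, e2]
  -- key pointwise bound for n ≥ 1
  have hkey : ∀ m : ℕ, |t (m + 1) - ρ| ≤ 2 * |r (m + 1) - ρ| + |r m - ρ| := by
    intro m
    have hT : tF (m + 1) ≠ 0 := ne_of_gt (htFpos (m + 1))
    have hBm : B m ≠ 0 := ne_of_gt (hBpos m)
    have hBm1 : B (m + 1) ≠ 0 := ne_of_gt (hBpos (m + 1))
    have hid : t (m + 1) - ρ =
        (r (m + 1) - ρ) * (B (m + 1) / tF (m + 1)) - (r m - ρ) * (B m / tF (m + 1)) := by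
      rw [htγ, hrdef]
      have hs : sS (m + 1) = bS (m + 1) - bS m := by rw [hbb m]; ring
      have ht' : tF (m + 1) = B (m + 1) - B m := by rw [hBB m]; ring
      rw [hs]
      field_simp
      linear_combination (-ρ) * ht'
    rw [hid]
    have hd1 : |B (m + 1) / tF (m + 1)| ≤ 2 := by
      rw [abs_of_pos (div_pos (hBpos (m + 1)) (htFpos (m + 1)))]
      rw [div_le_iff₀ (htFpos (m + 1))]
      have := hBle m
      rw [hBB m]
      linarith
    have hd2 : |B m / tF (m + 1)| ≤ 1 := by
      rw [abs_of_pos (div_pos (hBpos m) (htFpos (m + 1)))]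
      rw [div_le_one (htFpos (m + 1))]
      exact hBle m
    calc |(r (m + 1) - ρ) * (B (m + 1) / tF (m + 1)) - (r m - ρ) * (B m / tF (m + 1))|
        ≤ |(r (m + 1) - ρ) * (B (m + 1) / tF (m + 1))| + |(r m - ρ) * (B m / tF (m + 1))| :=
          abs_sub _ _
      _ ≤ |r (m + 1) - ρ| * 2 + |r m - ρ| * 1 := by
          rw [abs_mul, abs_mul]
          gcongr <;> first | exact abs_nonneg _ | exact hd1 | exact hd2
      _ = 2 * |r (m + 1) - ρ| + |r m - ρ| := by ring
  -- limits
  have habs : Tendsto (fun n => |r n - ρ|) atTop (nhds 0) := by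
    have := (hr.sub_const ρ).abs
    simpa using this
  have habs' : Tendsto (fun n : ℕ => |r (n - 1) - ρ|) atTop (nhds 0) :=
    habs.comp (tendsto_sub_atTop_nat 1)
  have hu : Tendsto (fun n : ℕ => 2 * |r n - ρ| + |r (n - 1) - ρ|) atTop (nhds 0) := by
    have := (habs.const_mul 2).add habs'
    simpa using this
  have htt : Tendsto (fun n => t n - ρ) atTop (nhds 0) := by
    apply squeeze_zero_norm' _ hu
    filter_upwards [eventually_ge_atTop 1] with n hn
    obtain ⟨m, rfl⟩ : ∃ m, n = m + 1 := ⟨n - 1, by omega⟩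
    simpa using hkey m
  have ht : Tendsto t atTop (nhds ρ) := by
    have := htt.add_const ρ
    simpa using this
  have ht' : Tendsto (fun n : ℕ => t (n - 1)) atTop (nhds ρ) :=
    ht.comp (tendsto_sub_atTop_nat 1)
  have hfinal := (ht'.add ht).const_mul (1 / 2 : ℝ)
  rw [show (1 / 2 : ℝ) * (ρ + ρ) = ρ by ring] at hfinal
  exact hfinal
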